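/- The function f(θ) = θ − 3·arctan( tan(θ)/3 ) is strictly decreasing on the open interval (π/2, π), and π < f(θ) < 2π for every θ ∈ (π/2, π). -/

import Mathlib

open Real

private lemma key_identity (c : ℝ) :
    3 * Real.sin c * Real.cos (3 * c) - Real.sin (3 * c) * Real.cos c
      = -8 * Real.sin c ^ 3 * Real.cos c := by
  rw [Real.sin_three_mul, Real.cos_three_mul]
  linear_combination (12 * Real.sin c * Real.cos c) * (Real.sin_sq_add_cos_sq c)

private lemma arctan_lt_aux {θ : ℝ} (h1 : π / 2 < θ) (h2 : θ < π) :
    Real.arctan (Real.tan θ / 3) < (θ - π) / 3 := by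
  have hpi := Real.pi_pos
  set d := (θ - π) / 3 with hd
  have hd1 : -(π / 6) < d := by rw [hd]; linarith
  have hd2 : d < 0 := by rw [hd]; linarith
  have h3d : 3 * d = θ - π := by rw [hd]; ring
  have htan : Real.tan (3 * d) = Real.tan θ := by rw [h3d, Real.tan_sub_pi]
  have hsin3 : Real.sin (3 * d) < 0 :=
    Real.sin_neg_of_neg_of_neg_pi_lt (by linarith) (by linarith)
  have hcos3 : 0 < Real.cos (3 * d) :=
    Real.cos_pos_of_mem_Ioo ⟨by linarith, by linarith⟩
  have hsind : Real.sin d < 0 :=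
    Real.sin_neg_of_neg_of_neg_pi_lt hd2 (by linarith)
  have hcosd : 0 < Real.cos d :=
    Real.cos_pos_of_mem_Ioo ⟨by linarith, by linarith⟩
  have hlt : Real.tan θ / 3 < Real.tan d := by
    rw [← htan, Real.tan_eq_sin_div_cos, Real.tan_eq_sin_div_cos, div_div,
      div_lt_div_iff₀ (by positivity) hcosd]
    nlinarith [key_identity d, mul_pos (mul_pos (mul_pos (neg_pos.2 hsind)
      (neg_pos.2 hsind)) (neg_pos.2 hsind)) hcosd]
  calc Real.arctan (Real.tan θ / 3) < Real.arctan (Real.tan d) :=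
        Real.arctan_strictMono hlt
    _ = d := Real.arctan_tan (by linarith) (by linarith)

private lemma lt_arctan_aux {θ : ℝ} (h1 : π / 2 < θ) (h2 : θ < π) :
    (θ - 2 * π) / 3 < Real.arctan (Real.tan θ / 3) := by
  have hpi := Real.pi_pos
  set c := (θ - 2 * π) / 3 with hc
  have hc1 : -(π / 2) < c := by rw [hc]; linarith
  have hc2 : c < -(π / 3) := by rw [hc]; linarith
  have h3c : 3 * c = θ - 2 * π := by rw [hc]; ring
  have htan : Real.tan (3 * c) = Real.tan θ := by
    rw [h3c, show θ - 2 * π = θ - π - π by ring, Real.tan_sub_pi, Real.tan_sub_pi]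
  have hsin3 : 0 < Real.sin (3 * c) := by
    rw [h3c, Real.sin_sub_two_pi]
    exact Real.sin_pos_of_pos_of_lt_pi (by linarith) h2
  have hcos3 : Real.cos (3 * c) < 0 := by
    rw [h3c, Real.cos_sub_two_pi]
    exact Real.cos_neg_of_pi_div_two_lt_of_lt h1 (by linarith)
  have hsinc : Real.sin c < 0 :=
    Real.sin_neg_of_neg_of_neg_pi_lt (by linarith) (by linarith)
  have hcosc : 0 < Real.cos c :=
    Real.cos_pos_of_mem_Ioo ⟨by linarith, by linarith⟩
  have hlt : Real.tan c < Real.tan θ / 3 := by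
    rw [← htan, Real.tan_eq_sin_div_cos, Real.tan_eq_sin_div_cos,
      show Real.sin (3 * c) / Real.cos (3 * c) = -Real.sin (3 * c) / -Real.cos (3 * c) by
        rw [neg_div_neg_eq],
      div_div, div_lt_div_iff₀ hcosc (by linarith)]
    nlinarith [key_identity c, mul_pos (mul_pos (mul_pos (neg_pos.2 hsinc)
      (neg_pos.2 hsinc)) (neg_pos.2 hsinc)) hcosc]
  calc c = Real.arctan (Real.tan c) :=
        (Real.arctan_tan hc1 (by linarith)).symm
    _ < Real.arctan (Real.tan θ / 3) := Real.arctan_strictMono hlt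

/-- Monotonicity and bounds for `φ(θ) = θ − 3·arctan(tan θ / 3)` on `(π/2, π)`
(formula (4.22) of the paper, branch with 3π subtracted). -/
theorem phi_strictAnti_and_bounds_second :
    StrictAntiOn (fun θ : ℝ => θ - 3 * Real.arctan (Real.tan θ / 3))
      (Set.Ioo (π / 2) π) ∧
    ∀ θ ∈ Set.Ioo (π / 2) π,
      π < θ - 3 * Real.arctan (Real.tan θ / 3) ∧
      θ - 3 * Real.arctan (Real.tan θ / 3) < 2 * π := by
  constructor
  · apply strictAntiOn_of_deriv_neg (convex_Ioo _ _)
    · intro θ hθ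
      have hcos : Real.cos θ ≠ 0 := by
        have := Real.cos_neg_of_pi_div_two_lt_of_lt hθ.1 (by linarith [hθ.2, Real.pi_pos])
        linarith
      have htc : ContinuousAt Real.tan θ := Real.continuousAt_tan.2 hcos
      exact (continuousAt_id.sub ((continuousAt_const.mul
        (Real.continuous_arctan.continuousAt.comp (htc.div_const 3))))).continuousWithinAt
    · intro θ hθ
      rw [interior_Ioo] at hθ
      have hcosneg : Real.cos θ < 0 :=
        Real.cos_neg_of_pi_div_two_lt_of_lt hθ.1 (by linarith [hθ.2, Real.pi_pos])
      have hcos : Real.cos θ ≠ 0 := hcosneg.ne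
      have hsinpos : 0 < Real.sin θ :=
        Real.sin_pos_of_pos_of_lt_pi (by linarith [hθ.1, Real.pi_pos]) hθ.2
      have htneg : Real.tan θ < 0 := by
        rw [Real.tan_eq_sin_div_cos]
        exact div_neg_of_pos_of_neg hsinpos hcosneg
      have hD : HasDerivAt (fun θ : ℝ => θ - 3 * Real.arctan (Real.tan θ / 3))
          (1 - 3 * (1 / (1 + (Real.tan θ / 3) ^ 2) * (1 / Real.cos θ ^ 2 / 3))) θ := by
        have hA := Real.hasDerivAt_arctan (Real.tan θ / 3)
        have hB := ((hA.comp θ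
            ((Real.hasDerivAt_tan hcos).div_const 3))).const_mul 3
        exact (hasDerivAt_id θ).sub hB
      rw [hD.deriv]
      set t := Real.tan θ with ht
      have hcossq : Real.cos θ ^ 2 = (1 + t ^ 2)⁻¹ := (Real.inv_one_add_tan_sq hcos).symm
      have h1t : (0:ℝ) < 1 + t ^ 2 := by positivity
      have h9t : (0:ℝ) < 1 + (t / 3) ^ 2 := by positivity
      rw [hcossq]
      have heq : 1 / ((1 + t ^ 2)⁻¹) = 1 + t ^ 2 := by
        field_simp
      rw [heq, show 3 * (1 / (1 + (t / 3) ^ 2) * ((1 + t ^ 2) / 3))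
          = (1 + t ^ 2) / (1 + (t / 3) ^ 2) by ring, sub_neg, lt_div_iff₀ h9t]
      nlinarith [mul_pos (neg_pos.2 htneg) (neg_pos.2 htneg)]
  · intro θ hθ
    obtain ⟨h1, h2⟩ := hθ
    constructor
    · have := arctan_lt_aux h1 h2
      linarith
    · have := lt_arctan_aux h1 h2
      linarith
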